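/- arXiv:1611.03991 — 2 statements merged into one kernel-verified Lean document; each statement's English description precedes it below -/
import Mathlib

section
/- Let T be a tournament whose directed domination graph contains a directed Hamiltonian cycle C (a directed cycle visiting all vertices of T). Then the vertex set of T is the unique minimal τ-retentive set of T; in particular Schwartz's Conjecture holds for T. -/
variable {V : Type}

/-- Inneighbors of `v` inside the subtournament on `s` (excluding `v` itself). -/
def inn [DecidableEq V] (r : V → V → Prop) [DecidableRel r] (s : Finset V) (v : V) :
    Finset V :=
  (s.filter fun u => r u v).erase v

lemma inn_card_lt [DecidableEq V] (r : V → V → Prop) [DecidableRel r]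
    (s : Finset V) (v : V) (hv : v ∈ s) : (inn r s v).card < s.card := by
  have h1 : inn r s v ⊆ s.erase v := by
    intro x hx
    rcases Finset.mem_erase.mp hx with ⟨hxv, hx2⟩
    exact Finset.mem_erase.mpr ⟨hxv, (Finset.mem_filter.mp hx2).1⟩
  calc (inn r s v).card ≤ (s.erase v).card := Finset.card_le_card h1
    _ < s.card := Finset.card_erase_lt_of_mem hv

/-- The tournament equilibrium set of the subtournament of `r` on `s`:
the union of all minimal τ-retentive sets. -/
def tau [DecidableEq V] (r : V → V → Prop) [DecidableRel r] (s : Finset V) : Set V :=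
  {x | ∃ A : Finset V, x ∈ A ∧ A ⊆ s ∧ A.Nonempty ∧
    (∀ v, v ∈ s → v ∈ A → ((inn r s v).Nonempty → tau r (inn r s v) ⊆ ↑A)) ∧
    ∀ B : Finset V, B ⊆ s → B ⊂ A →
      ¬ (B.Nonempty ∧
        ∀ v, v ∈ s → v ∈ B → ((inn r s v).Nonempty → tau r (inn r s v) ⊆ ↑B))}
termination_by s.card
decreasing_by
  all_goals exact inn_card_lt r s v (by assumption)

/-- `A` is a τ-retentive set of the tournament on `s`. -/
def Retentive [DecidableEq V] (r : V → V → Prop) [DecidableRel r] (s A : Finset V) : Prop :=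
  A ⊆ s ∧ A.Nonempty ∧ ∀ v ∈ A, (inn r s v).Nonempty → tau r (inn r s v) ⊆ ↑A

/-- `A` is a minimal τ-retentive set of the tournament on `s`. -/
def MinRetentive [DecidableEq V] (r : V → V → Prop) [DecidableRel r] (s A : Finset V) : Prop :=
  Retentive r s A ∧ ∀ B, Retentive r s B → B ⊆ A → B = A

/-- `r` is a tournament on the vertex set `s`. -/
def IsTournament (r : V → V → Prop) (s : Finset V) : Prop :=
  (∀ v ∈ s, ¬ r v v) ∧ ∀ u ∈ s, ∀ v ∈ s, u ≠ v → (r u v ↔ ¬ r v u)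

/-- `u` is the captain of `v` in the subtournament on `s`:
`u` dominates `v` and all other inneighbors of `v`. -/
def IsCaptain (r : V → V → Prop) (s : Finset V) (u v : V) : Prop :=
  u ∈ s ∧ v ∈ s ∧ r u v ∧ ∀ w ∈ s, w ≠ u → r w v → r u w

/-- The (undirected) domination graph of the subtournament on `s`. -/
def domGraph (r : V → V → Prop) (s : Finset V) : SimpleGraph V where
  Adj u v := (IsCaptain r s u v ∨ IsCaptain r s v u) ∧ u ≠ v
  symm := by
    constructor
    intro u v h
    exact ⟨h.1.symm, h.2.symm⟩
  loopless := by
    constructor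
    intro u h
    exact h.2 rfl

lemma tau_subset [DecidableEq V] (r : V → V → Prop) [DecidableRel r] (t : Finset V) :
    tau r t ⊆ ↑t := by
  intro x hx
  rw [tau] at hx
  obtain ⟨A, hxA, hAt, _⟩ := hx
  exact hAt hxA

lemma mem_inn_iff [DecidableEq V] (r : V → V → Prop) [DecidableRel r]
    (t : Finset V) (v w : V) : w ∈ inn r t v ↔ w ≠ v ∧ w ∈ t ∧ r w v := by
  simp [inn, and_assoc]

/-- A Condorcet winner of the subtournament on `t` belongs to `tau r t`. -/
lemma condorcet_mem_tau [DecidableEq V] (r : V → V → Prop) [DecidableRel r]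
    (t : Finset V) (u : V) (hu : u ∈ t)
    (hdom : ∀ w ∈ t, w ≠ u → ¬ r w u) : u ∈ tau r t := by
  rw [tau]
  refine ⟨{u}, Finset.mem_singleton_self u, Finset.singleton_subset_iff.mpr hu,
    ⟨u, Finset.mem_singleton_self u⟩, ?_, ?_⟩
  · intro v hv hvA hne
    rcases Finset.mem_singleton.mp hvA with rfl
    exfalso
    obtain ⟨w, hw⟩ := hne
    rcases (mem_inn_iff r t v w).mp hw with ⟨hwne, hwt, hwr⟩
    exact hdom w hwt hwne hwr
  · intro B hBt hBA
    rcases Finset.ssubset_singleton_iff.mp hBA with rfl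
    rintro ⟨⟨b, hb⟩, -⟩
    exact absurd hb (Finset.notMem_empty b)

theorem stmt14 [DecidableEq V] (r : V → V → Prop) [DecidableRel r] (s : Finset V)
    (hT : IsTournament r s)
    (n : ℕ) (hn : 0 < n) (c : Fin n → V) (hinj : Function.Injective c)
    (hham : ∀ x, x ∈ s ↔ ∃ i, c i = x)
    (hcyc : ∀ i : Fin n, IsCaptain r s (c i) (c ⟨(i.val + 1) % n, Nat.mod_lt _ hn⟩)) :
    MinRetentive r s s ∧ ∀ B, MinRetentive r s B → B = s := by
  -- Key: every retentive set equals s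
  have key : ∀ A : Finset V, Retentive r s A → A = s := by
    intro A hA
    obtain ⟨hAs, ⟨x, hx⟩, hret⟩ := hA
    obtain ⟨i₀, hi₀⟩ := (hham x).mp (hAs hx)
    -- backward closure along the cycle
    have back : ∀ j : Fin n, c ⟨(j.val + 1) % n, Nat.mod_lt _ hn⟩ ∈ A → c j ∈ A := by
      intro j hj
      set v := c ⟨(j.val + 1) % n, Nat.mod_lt _ hn⟩ with hv
      obtain ⟨hu_s, hv_s, huv, hdomc⟩ := hcyc j
      have hune : c j ≠ v := by
        intro h
        rw [h] at huv
        exact hT.1 v hv_s huv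
      have hu_in : c j ∈ inn r s v :=
        (mem_inn_iff r s v (c j)).mpr ⟨hune, hu_s, huv⟩
      have hne : (inn r s v).Nonempty := ⟨_, hu_in⟩
      have hsub := hret v hj hne
      apply hsub
      apply condorcet_mem_tau r (inn r s v) (c j) hu_in
      intro w hw hwne
      rcases (mem_inn_iff r s v w).mp hw with ⟨_, hws, hwv⟩
      have hruw : r (c j) w := hdomc w hws hwne hwv
      exact fun hrwu => (hT.2 (c j) hu_s w hws (Ne.symm hwne)).mp hruw hrwu
    -- chain backwards m steps
    have chain : ∀ m : ℕ, ∀ j : ℕ, ∀ hj : j < n,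
        c ⟨(j + m) % n, Nat.mod_lt _ hn⟩ ∈ A → c ⟨j, hj⟩ ∈ A := by
      intro m
      induction m with
      | zero =>
        intro j hj h
        have : ((j + 0) % n) = j := by simp [Nat.mod_eq_of_lt hj]
        have e : (⟨(j + 0) % n, Nat.mod_lt _ hn⟩ : Fin n) = ⟨j, hj⟩ := Fin.ext this
        rwa [e] at h
      | succ m ih =>
        intro j hj h
        have hj1 : (j + 1) % n < n := Nat.mod_lt _ hn
        have e : (((j + 1) % n + m) % n) = (j + (m + 1)) % n := by
          rw [Nat.mod_add_mod]
          ring_nf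
        have h' : c ⟨((j + 1) % n + m) % n, Nat.mod_lt _ hn⟩ ∈ A := by
          have e2 : (⟨((j + 1) % n + m) % n, Nat.mod_lt _ hn⟩ : Fin n)
              = ⟨(j + (m + 1)) % n, Nat.mod_lt _ hn⟩ := Fin.ext e
          rwa [e2]
        have h2 := ih ((j + 1) % n) hj1 h'
        exact back ⟨j, hj⟩ h2
    have allmem : ∀ j : ℕ, ∀ hj : j < n, c ⟨j, hj⟩ ∈ A := by
      intro j hj
      apply chain (i₀.val + n - j) j hj
      have e1 : (j + (i₀.val + n - j)) % n = i₀.val := by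
        have : j + (i₀.val + n - j) = i₀.val + n := by omega
        rw [this, Nat.add_mod_right, Nat.mod_eq_of_lt i₀.isLt]
      have e2 : (⟨(j + (i₀.val + n - j)) % n, Nat.mod_lt _ hn⟩ : Fin n) = i₀ :=
        Fin.ext e1
      rw [e2, hi₀]
      exact hx
    apply Finset.Subset.antisymm hAs
    intro y hy
    obtain ⟨j, hj⟩ := (hham y).mp hy
    have : (⟨j.val, j.isLt⟩ : Fin n) = j := Fin.ext rfl
    rw [← hj, ← this]
    exact allmem j.val j.isLt
  have hsret : Retentive r s s := by
    refine ⟨Finset.Subset.refl s, ⟨c ⟨0, hn⟩, (hham _).mpr ⟨_, rfl⟩⟩, ?_⟩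
    intro v hv hne
    refine (tau_subset r (inn r s v)).trans ?_
    intro w hw
    rcases (mem_inn_iff r s v w).mp hw with ⟨_, hws, _⟩
    exact hws
  refine ⟨⟨hsret, fun B hB _ => key B hB⟩, fun B hB => key B hB.1⟩
end

section
/- Let T be a tournament and R1, R2 disjoint subsets of V(T) such that the directed domination graph of T[R1] is nonempty (has at least one arc) and the directed domination graph of T[R2] contains a directed cycle. Then R1 and R2 cannot both be minimal τ-retentive sets of T. -/
variable {V : Type}

/-- Auxiliary: `A` is nonempty and closed for the tournament on `X`. -/
def Good [DecidableEq V] (r : V → V → Prop) [DecidableRel r] (X A : Finset V) : Prop :=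
  A.Nonempty ∧
    ∀ v, v ∈ X → v ∈ A → ((inn r X v).Nonempty → tau r (inn r X v) ⊆ ↑A)

lemma inn_subset [DecidableEq V] (r : V → V → Prop) [DecidableRel r] (X : Finset V) (v : V) :
    inn r X v ⊆ X :=
  (Finset.erase_subset _ _).trans (Finset.filter_subset _ _)

lemma tau_sub [DecidableEq V] (r : V → V → Prop) [DecidableRel r] (X : Finset V) :
    tau r X ⊆ ↑X := by
  intro x hx
  rw [tau] at hx
  obtain ⟨A, hxA, hAX, -⟩ := hx
  exact hAX hxA

lemma mem_tau_of [DecidableEq V] (r : V → V → Prop) [DecidableRel r] (X A : Finset V) (x : V)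
    (hx : x ∈ A) (hAX : A ⊆ X) (hA : Good r X A)
    (hmin : ∀ B ⊆ X, B ⊂ A → ¬ Good r X B) : x ∈ tau r X := by
  rw [tau]
  exact ⟨A, hx, hAX, hA.1, hA.2, fun B hBX hBA hB => hmin B hBX hBA ⟨hB.1, hB.2⟩⟩

lemma good_self [DecidableEq V] (r : V → V → Prop) [DecidableRel r] (X : Finset V)
    (hX : X.Nonempty) : Good r X X :=
  ⟨hX, fun v _ _ _ => (tau_sub r _).trans (by exact_mod_cast inn_subset r X v)⟩

lemma exists_minGood [DecidableEq V] (r : V → V → Prop) [DecidableRel r] (X : Finset V) :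
    ∀ A : Finset V, A ⊆ X → Good r X A →
      ∃ A', A' ⊆ A ∧ A' ⊆ X ∧ Good r X A' ∧ ∀ B ⊆ X, B ⊂ A' → ¬ Good r X B := by
  intro A
  induction A using Finset.strongInductionOn with
  | _ A ih =>
    intro hAX hA
    by_cases hmin : ∀ B ⊆ X, B ⊂ A → ¬ Good r X B
    · exact ⟨A, Finset.Subset.refl _, hAX, hA, hmin⟩
    · push_neg at hmin
      obtain ⟨B, hBX, hBA, hB⟩ := hmin
      obtain ⟨A', h1, h2, h3, h4⟩ := ih B hBA hBX hB
      exact ⟨A', h1.trans hBA.subset, h2, h3, h4⟩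

lemma tau_nonempty [DecidableEq V] (r : V → V → Prop) [DecidableRel r] (X : Finset V)
    (hX : X.Nonempty) : (tau r X).Nonempty := by
  obtain ⟨A', h1, h2, h3, h4⟩ := exists_minGood r X X (Finset.Subset.refl _) (good_self r X hX)
  obtain ⟨x, hx⟩ := h3.1
  exact ⟨x, mem_tau_of r X A' x hx h2 h3 h4⟩

/-- Key descent lemma: if `u` dominates all of `S`, `A ⊆ S`, and `A` is nonempty and
closed in `B`, then `u ∈ A`. -/
lemma lemL [DecidableEq V] (r : V → V → Prop) [DecidableRel r] :
    ∀ (N : ℕ) (B S A : Finset V) (u : V), B.card ≤ N → S ⊆ B → u ∈ S →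
      (∀ w ∈ S, w ≠ u → r u w) → A ⊆ S → Good r B A → u ∈ A := by
  intro N
  induction N with
  | zero =>
    intro B S A u hc hSB huS _ _ _
    have : u ∈ B := hSB huS
    have := Finset.card_pos.mpr ⟨u, this⟩
    omega
  | succ N ih =>
    intro B S A u hc hSB huS hcond hAS hA
    obtain ⟨v', hv'⟩ := hA.1
    by_cases hv'u : v' = u
    · exact hv'u ▸ hv'
    · have hv'S : v' ∈ S := hAS hv'
      have hv'B : v' ∈ B := hSB hv'S
      have hruv' : r u v' := hcond v' hv'S hv'u
      have huB' : u ∈ inn r B v' :=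
        Finset.mem_erase.mpr ⟨fun h => hv'u h.symm,
          Finset.mem_filter.mpr ⟨hSB huS, hruv'⟩⟩
      have htau' : tau r (inn r B v') ⊆ ↑A := hA.2 v' hv'B hv' ⟨u, huB'⟩
      obtain ⟨A', hA'1, hA'2, hA'3, hA'4⟩ :=
        exists_minGood r (inn r B v') (inn r B v') (Finset.Subset.refl _)
          (good_self r _ ⟨u, huB'⟩)
      have hA'A : A' ⊆ A := fun x hx =>
        Finset.mem_coe.mp (htau' (mem_tau_of r _ A' x hx hA'2 hA'3 hA'4))
      have hcard : (inn r B v').card ≤ N := by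
        have := inn_card_lt r B v' hv'B
        omega
      have huA' : u ∈ A' := by
        refine ih (inn r B v') (S ∩ inn r B v') A' u hcard Finset.inter_subset_right
          (Finset.mem_inter.mpr ⟨huS, huB'⟩) (fun w hw hwne => hcond w (Finset.mem_inter.mp hw).1 hwne)
          (fun x hx => Finset.mem_inter.mpr ⟨hAS (hA'A hx), hA'2 hx⟩) hA'3
      exact hA'A huA'

/-- Captain transfer: captains in a retentive set are captains of the whole tournament. -/
lemma captain_transfer [DecidableEq V] (r : V → V → Prop) [DecidableRel r] (s : Finset V)
    (hT : IsTournament r s) (R : Finset V) (hRs : R ⊆ s) (hret : Retentive r s R)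
    (u v : V) (h : IsCaptain r R u v) : IsCaptain r s u v := by
  obtain ⟨huR, hvR, hruv, hcap⟩ := h
  have hus : u ∈ s := hRs huR
  have hvs : v ∈ s := hRs hvR
  have hunv : u ≠ v := by rintro rfl; exact hT.1 u hus hruv
  have hBs : inn r s v ⊆ s := inn_subset r s v
  have huB : u ∈ inn r s v :=
    Finset.mem_erase.mpr ⟨hunv, Finset.mem_filter.mpr ⟨hus, hruv⟩⟩
  have htauR : tau r (inn r s v) ⊆ ↑R := hret.2.2 v hvR ⟨u, huB⟩
  obtain ⟨A, hAB0, hAB, hGood, hmin⟩ :=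
    exists_minGood r (inn r s v) (inn r s v) (Finset.Subset.refl _) (good_self r _ ⟨u, huB⟩)
  have hAS : A ⊆ inn r s v ∩ R := fun x hx =>
    Finset.mem_inter.mpr ⟨hAB hx,
      Finset.mem_coe.mp (htauR (mem_tau_of r _ A x hx hAB hGood hmin))⟩
  have hcond : ∀ w ∈ inn r s v ∩ R, w ≠ u → r u w := by
    intro w hw hwne
    obtain ⟨hwB, hwR⟩ := Finset.mem_inter.mp hw
    exact hcap w hwR hwne (Finset.mem_filter.mp (Finset.mem_of_mem_erase hwB)).2
  have huA : u ∈ A :=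
    lemL r (inn r s v).card (inn r s v) (inn r s v ∩ R) A u le_rfl
      Finset.inter_subset_left (Finset.mem_inter.mpr ⟨huB, huR⟩) hcond hAS hGood
  have hinn_empty : ∀ w ∈ inn r s v, w ≠ u → ¬ r w u := by
    intro w hwB hwu hrwu
    have hwinn : w ∈ inn r (inn r s v) u :=
      Finset.mem_erase.mpr ⟨hwu, Finset.mem_filter.mpr ⟨hwB, hrwu⟩⟩
    have h1 : tau r (inn r (inn r s v) u) ⊆ ↑A := hGood.2 u huB huA ⟨w, hwinn⟩
    obtain ⟨x, hx⟩ := tau_nonempty r _ ⟨w, hwinn⟩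
    have hxA : x ∈ A := Finset.mem_coe.mp (h1 hx)
    have hxinn : x ∈ inn r (inn r s v) u := Finset.mem_coe.mp (tau_sub r _ hx)
    obtain ⟨hxu, hx2⟩ := Finset.mem_erase.mp hxinn
    have hrux : r u x := hcond x (hAS hxA) hxu
    have hxB : x ∈ inn r s v := (Finset.mem_filter.mp hx2).1
    exact (hT.2 u hus x (hBs hxB) (Ne.symm hxu)).mp hrux (Finset.mem_filter.mp hx2).2
  refine ⟨hus, hvs, hruv, ?_⟩
  intro w hws hwu hrwv
  have hwv : w ≠ v := fun h => hT.1 v hvs (h ▸ hrwv)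
  have hwB : w ∈ inn r s v :=
    Finset.mem_erase.mpr ⟨hwv, Finset.mem_filter.mpr ⟨hws, hrwv⟩⟩
  exact (hT.2 u hus w hws (Ne.symm hwu)).mpr (hinn_empty w hwB hwu)

theorem stmt16 [DecidableEq V] (r : V → V → Prop) [DecidableRel r] (s : Finset V)
    (hT : IsTournament r s) (R1 R2 : Finset V) (h1s : R1 ⊆ s) (h2s : R2 ⊆ s)
    (hd : Disjoint R1 R2)
    (harc : ∃ u v, IsCaptain r R1 u v)
    (n : ℕ) (hn : 0 < n) (c : Fin n → V) (hinj : Function.Injective c)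
    (hcyc : ∀ i : Fin n, IsCaptain r R2 (c i) (c ⟨(i.val + 1) % n, Nat.mod_lt _ hn⟩)) :
    ¬ (MinRetentive r s R1 ∧ MinRetentive r s R2) := by
  rintro ⟨hm1, hm2⟩
  set d : ℕ → V := fun k => c ⟨k % n, Nat.mod_lt _ hn⟩ with hddef
  have hdc : ∀ k, IsCaptain r R2 (d k) (d (k + 1)) := by
    intro k
    have h := hcyc ⟨k % n, Nat.mod_lt _ hn⟩
    have he : (⟨((⟨k % n, Nat.mod_lt _ hn⟩ : Fin n).val + 1) % n,
        Nat.mod_lt _ hn⟩ : Fin n) = ⟨(k + 1) % n, Nat.mod_lt _ hn⟩ := by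
      apply Fin.ext
      simp [Nat.mod_add_mod]
    rw [he] at h
    exact h
  have hdR2 : ∀ k, d k ∈ R2 := fun k => (hdc k).1
  have hds : ∀ k, d k ∈ s := fun k => h2s (hdR2 k)
  have hdper : ∀ k, d (k + n) = d k := by
    intro k
    simp only [hddef, Nat.add_mod_right]
  have hdne : ∀ k j, 0 < j → j < n → d k ≠ d (k + j) := by
    intro k j hj1 hj2 heq
    have h1 : (⟨k % n, Nat.mod_lt _ hn⟩ : Fin n) = ⟨(k + j) % n, Nat.mod_lt _ hn⟩ := hinj heq
    have h2 : k % n = (k + j) % n := congrArg Fin.val h1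
    have h3 : n ∣ k + j - k := (Nat.modEq_iff_dvd' (Nat.le_add_right k j)).mp h2
    simp only [Nat.add_sub_cancel_left] at h3
    exact absurd (Nat.le_of_dvd hj1 h3) (by omega)
  have asym : ∀ a ∈ s, ∀ b ∈ s, a ≠ b → r a b → ¬ r b a :=
    fun a ha b hb hne hab => (hT.2 a ha b hb hne).mp hab
  have total : ∀ a ∈ s, ∀ b ∈ s, a ≠ b → ¬ r b a → r a b :=
    fun a ha b hb hne h => (hT.2 a ha b hb hne).mpr h
  by_cases hn1 : n = 1
  · have h1 := (hdc 0).2.2.1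
    have h2 : d (0 + 1) = d 0 := by have := hdper 0; rwa [hn1] at this
    exact hT.1 (d 0) (hds 0) (h2 ▸ h1)
  by_cases hn2 : n = 2
  · have h1 := (hdc 0).2.2.1
    have h2 := (hdc 1).2.2.1
    have h3 : d (0 + 2) = d 0 := by have := hdper 0; rwa [hn2] at this
    have h4 : d (1 + 1) = d (0 + 2) := rfl
    rw [h4, h3] at h2
    exact asym (d 0) (hds 0) (d (0 + 1)) (hds _) (hdne 0 1 one_pos (by omega)) h1 h2
  have hn3 : 3 ≤ n := by omega
  -- parity claim
  have claim : ∀ m, 2 ≤ m → m < n → ∀ k,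
      (m % 2 = 0 → r (d (k + m)) (d k)) ∧ (m % 2 = 1 → r (d k) (d (k + m))) := by
    intro m
    induction m with
    | zero => omega
    | succ m ih =>
      intro h2 hlt k
      by_cases hm1 : m = 1
      · subst hm1
        constructor
        · intro _
          by_contra hcon
          have hne02 : d k ≠ d (k + 2) := hdne k 2 (by norm_num) (by omega)
          have h02 : r (d k) (d (k + 2)) := total _ (hds _) _ (hds _) hne02 hcon
          have h3 : r (d (k + 1)) (d k) :=
            (hdc (k + 1)).2.2.2 (d k) (hdR2 k) (hdne k 1 one_pos (by omega)) h02
          exact asym _ (hds k) _ (hds (k + 1)) (hdne k 1 one_pos (by omega))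
            ((hdc k).2.2.1) h3
        · omega
      · have h2m : 2 ≤ m := by omega
        have hltm : m < n := by omega
        constructor
        · intro hpar
          have hmodd : m % 2 = 1 := by omega
          have hCm := (ih h2m hltm k).2 hmodd
          by_contra hcon
          have hne : d k ≠ d (k + (m + 1)) := hdne k (m + 1) (by omega) hlt
          have h1 : r (d k) (d (k + (m + 1))) := total _ (hds _) _ (hds _) hne hcon
          have h3 : r (d (k + m)) (d k) :=
            (hdc (k + m)).2.2.2 (d k) (hdR2 k) (hdne k m (by omega) hltm) h1
          exact asym _ (hds k) _ (hds (k + m)) (hdne k m (by omega) hltm) hCm h3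
        · intro hpar
          have hmeven : m % 2 = 0 := by omega
          have hCm := (ih h2m hltm (k + 1)).1 hmeven
          have e : k + 1 + m = k + m + 1 := by omega
          rw [e] at hCm
          exact (hdc k).2.2.2 (d (k + m + 1)) (hdR2 _)
            (Ne.symm (hdne k (m + 1) (by omega) hlt)) hCm
  by_cases hpar : n % 2 = 0
  · -- even cycle: contradiction from the cycle alone
    have h1 := (claim (n - 1) (by omega) (by omega) 1).2 (by omega)
    have e : 1 + (n - 1) = 0 + n := by omega
    rw [e, hdper 0] at h1
    have h2 := (hdc 0).2.2.1
    exact asym _ (hds 0) _ (hds 1) (hdne 0 1 one_pos (by omega)) h2 h1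
  · -- odd cycle: use the disjoint edge
    have hodd : n % 2 = 1 := by omega
    obtain ⟨u, v, huv⟩ := harc
    have Ucap : IsCaptain r s u v := captain_transfer r s hT R1 h1s hm1.1 u v huv
    have Dcap : ∀ k, IsCaptain r s (d k) (d (k + 1)) :=
      fun k => captain_transfer r s hT R2 h2s hm2.1 _ _ (hdc k)
    have hvR1 : v ∈ R1 := huv.2.1
    have huR1 : u ∈ R1 := huv.1
    have hvs : v ∈ s := h1s hvR1
    have hus : u ∈ s := h1s huR1
    have hvd : ∀ k, v ≠ d k := fun k h => (Finset.disjoint_left.mp hd hvR1) (h ▸ hdR2 k)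
    have hud : ∀ k, u ≠ d k := fun k h => (Finset.disjoint_left.mp hd huR1) (h ▸ hdR2 k)
    have stepb : ∀ k, r (d (k + 2)) v → r v (d (k + 1)) ∧ r (d k) v := by
      intro k hQ2
      have h1 : r u (d (k + 2)) := Ucap.2.2.2 (d (k + 2)) (hds _) (Ne.symm (hud _)) hQ2
      have h2 : r (d (k + 1)) u := (Dcap (k + 1)).2.2.2 u hus (hud (k + 1)) h1
      have h3 : ¬ r (d (k + 1)) v := fun hcon =>
        asym _ (hds (k + 1)) u hus (Ne.symm (hud _)) h2
          (Ucap.2.2.2 (d (k + 1)) (hds _) (Ne.symm (hud _)) hcon)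
      have h4 : r v (d (k + 1)) := total v hvs _ (hds _) (hvd _) h3
      exact ⟨h4, (Dcap k).2.2.2 v hvs (hvd k) h4⟩
    have descent : ∀ m k, r (d (k + 2 * m)) v → r (d k) v := by
      intro m
      induction m with
      | zero => intro k h; exact h
      | succ m ih =>
        intro k h
        have e : k + 2 * (m + 1) = k + 2 + 2 * m := by omega
        rw [e] at h
        exact (stepb k (ih (k + 2) h)).2
    have hi0 : ∃ i0, r (d i0) v := by
      by_cases h1 : r (d 1) v
      · exact ⟨1, h1⟩
      · have h2 : r v (d 1) := total v hvs (d 1) (hds _) (hvd 1) h1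
        exact ⟨0, (Dcap 0).2.2.2 v hvs (hvd 0) h2⟩
    obtain ⟨i0, hQ0⟩ := hi0
    have hQn : r (d (i0 + n)) v := by rw [hdper i0]; exact hQ0
    have hQ2n : r (d (i0 + 2 * n)) v := by
      have e : i0 + 2 * n = i0 + n + n := by omega
      rw [e, hdper, hdper]; exact hQ0
    have hQ1 : r (d (i0 + 1)) v := by
      have e : i0 + n = i0 + 1 + 2 * ((n - 1) / 2) := by omega
      rw [e] at hQn
      exact descent _ _ hQn
    have hQ2 : r (d (i0 + 2)) v := by
      have e : i0 + 2 * n = i0 + 2 + 2 * (n - 1) := by omega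
      rw [e] at hQ2n
      exact descent _ _ hQ2n
    exact asym _ (hds (i0 + 1)) v hvs (Ne.symm (hvd _)) hQ1 (stepb i0 hQ2).1
end
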